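/- Suppose U, U₁, U₂ are smooth functions of u and for all real w the expression A₋₁(u) e^{-h(u,w)} + A₀(u) + A₁(u) e^{h(u,w)} vanishes identically, where h(u,w) takes at least three distinct values of e^h for each fixed u (i.e., e^h depends nontrivially on w). Then A₋₁ = A₀ = A₁ = 0. In particular, compatibility of the Riccati and harmonic equations forces U''/U = U₁''/U₁ = U₂ - 2 U U₁ and (U₂ + 6 U U₁)' = 0, hence U₂ = C₁ - 6 U U₁ for a constant C₁ and U'' = (C₁ - 8 U U₁) U. -/

import Mathlib

/-- A real quadratic vanishing at three distinct points has zero coefficients. -/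
lemma quad_zero_aux {a b c t₁ t₂ t₃ : ℝ} (h12 : t₁ ≠ t₂) (h13 : t₁ ≠ t₃) (h23 : t₂ ≠ t₃)
    (e1 : a + b * t₁ + c * t₁ ^ 2 = 0) (e2 : a + b * t₂ + c * t₂ ^ 2 = 0)
    (e3 : a + b * t₃ + c * t₃ ^ 2 = 0) : a = 0 ∧ b = 0 ∧ c = 0 := by
  have h12' : t₁ - t₂ ≠ 0 := sub_ne_zero.mpr h12
  have h13' : t₁ - t₃ ≠ 0 := sub_ne_zero.mpr h13
  have h23' : t₂ - t₃ ≠ 0 := sub_ne_zero.mpr h23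
  have hc : c = 0 := by
    have key : c * ((t₁ - t₂) * (t₁ - t₃) * (t₂ - t₃)) = 0 := by
      linear_combination (t₂ - t₃) * e1 - (t₁ - t₃) * e2 + (t₁ - t₂) * e3
    exact (mul_eq_zero.mp key).resolve_right
      (mul_ne_zero (mul_ne_zero h12' h13') h23')
  have hb : b = 0 := by
    have key : b * (t₁ - t₂) = 0 := by
      linear_combination e1 - e2 - (t₁ ^ 2 - t₂ ^ 2) * hc
    exact (mul_eq_zero.mp key).resolve_right h12'
  have ha : a = 0 := by linear_combination e1 - t₁ * hb - t₁ ^ 2 * hc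
  exact ⟨ha, hb, hc⟩

/-- (1) A Laurent identity `Aneg e^{-h} + A₀ + A₁ e^{h} = 0` holding for all `w`,
where `e^{h(u,·)}` takes at least three distinct values for each `u`, forces
`Aneg = A₀ = A₁ = 0`.
(2) In particular, compatibility of the Riccati equation `h_u = U e^h + U₁ e^{-h}`
with the harmonic equation (encoded by the identity for `h_w²`) forces
`U''/U = U₁''/U₁ = U₂ - 2UU₁` and `(U₂ + 6UU₁)' = 0`; hence `U₂ = C₁ - 6UU₁` for a
constant `C₁` and `U'' = (C₁ - 8UU₁)U`. -/
theorem stmt12 (h hu hw huw : ℝ → ℝ → ℝ)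
    (Aneg A₀ A₁ : ℝ → ℝ)
    (U U₁ U₂ U' U₁' U₂' U'' U₁'' : ℝ → ℝ)
    -- three distinct values of e^h in w, for each u
    (hthree : ∀ u, ∃ w₁ w₂ w₃ : ℝ,
      h u w₁ ≠ h u w₂ ∧ h u w₁ ≠ h u w₃ ∧ h u w₂ ≠ h u w₃)
    -- part (1) hypothesis
    (hlaurent : ∀ u w,
      Aneg u * Real.exp (-(h u w)) + A₀ u + A₁ u * Real.exp (h u w) = 0)
    -- derivative data
    (hhu : ∀ u w, HasDerivAt (fun x => h x w) (hu u w) u)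
    (hhw : ∀ u w, HasDerivAt (fun y => h u y) (hw u w) w)
    (hhuw : ∀ u w, HasDerivAt (fun y => hu u y) (huw u w) w)
    (hhwu : ∀ u w, HasDerivAt (fun x => hw x w) (huw u w) u)
    (hU : ∀ u, HasDerivAt U (U' u) u) (hU' : ∀ u, HasDerivAt U' (U'' u) u)
    (hU₁ : ∀ u, HasDerivAt U₁ (U₁' u) u) (hU₁' : ∀ u, HasDerivAt U₁' (U₁'' u) u)
    (hU₂ : ∀ u, HasDerivAt U₂ (U₂' u) u)
    -- Riccati equation
    (hric : ∀ u w, hu u w = U u * Real.exp (h u w) + U₁ u * Real.exp (-(h u w)))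
    -- the integrated form of the harmonic equation
    (hwsq : ∀ u w,
      (hw u w) ^ 2 =
        -(U₁ u) ^ 2 * Real.exp (-(2 * h u w)) + 2 * U₁' u * Real.exp (-(h u w))
          - U₂ u - 2 * U' u * Real.exp (h u w) - (U u) ^ 2 * Real.exp (2 * h u w))
    -- nondegeneracy
    (hUnz : ∀ u, U u ≠ 0) (hU₁nz : ∀ u, U₁ u ≠ 0) :
    (∀ u, Aneg u = 0 ∧ A₀ u = 0 ∧ A₁ u = 0) ∧
    (∀ u, U'' u * U₁ u = U₁'' u * U u) ∧
    (∀ u, U'' u = (U₂ u - 2 * U u * U₁ u) * U u) ∧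
    (∀ u, U₂' u + 6 * (U' u * U₁ u + U u * U₁' u) = 0) ∧
    ∃ C₁ : ℝ, (∀ u, U₂ u = C₁ - 6 * U u * U₁ u) ∧
      ∀ u, U'' u = (C₁ - 8 * U u * U₁ u) * U u := by
  -- Part (1)
  have part1 : ∀ u, Aneg u = 0 ∧ A₀ u = 0 ∧ A₁ u = 0 := by
    intro u
    obtain ⟨w₁, w₂, w₃, d12, d13, d23⟩ := hthree u
    have key : ∀ w, Aneg u + A₀ u * Real.exp (h u w) + A₁ u * Real.exp (h u w) ^ 2 = 0 := by
      intro w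
      have hl := hlaurent u w
      have he : Real.exp (-(h u w)) * Real.exp (h u w) = 1 := by
        rw [← Real.exp_add]; simp
      linear_combination Real.exp (h u w) * hl - Aneg u * he
    have t12 : Real.exp (h u w₁) ≠ Real.exp (h u w₂) := fun he => d12 (Real.exp_injective he)
    have t13 : Real.exp (h u w₁) ≠ Real.exp (h u w₃) := fun he => d13 (Real.exp_injective he)
    have t23 : Real.exp (h u w₂) ≠ Real.exp (h u w₃) := fun he => d23 (Real.exp_injective he)
    exact quad_zero_aux t12 t13 t23 (key w₁) (key w₂) (key w₃)
  -- Part (2): the three Laurent coefficients of the compatibility condition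
  have key2 : ∀ u,
      (2 * U₁'' u + 4 * U u * U₁ u ^ 2 - 2 * U₁ u * U₂ u = 0) ∧
      (U₂' u + 6 * (U' u * U₁ u + U u * U₁' u) = 0) ∧
      (2 * U'' u - 2 * U u * U₂ u + 4 * U u ^ 2 * U₁ u = 0) := by
    intro u
    obtain ⟨w₁, w₂, w₃, d12, d13, d23⟩ := hthree u
    -- Laurent identity at each w
    have key : ∀ w,
        (2 * U₁'' u + 4 * U u * U₁ u ^ 2 - 2 * U₁ u * U₂ u)
          + (-(U₂' u + 6 * (U' u * U₁ u + U u * U₁' u))) * Real.exp (h u w)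
          + (-(2 * U'' u - 2 * U u * U₂ u + 4 * U u ^ 2 * U₁ u)) * Real.exp (h u w) ^ 2
        = 0 := by
      intro w
      set t : ℝ := Real.exp (h u w) with htdef
      set y : ℝ := Real.exp (-(h u w)) with hydef
      have hty : t * y = 1 := by rw [htdef, hydef, ← Real.exp_add]; simp
      have hy2 : Real.exp (-(2 * h u w)) = y ^ 2 := by
        rw [hydef, sq, ← Real.exp_add]; congr 1; ring
      have ht2 : Real.exp (2 * h u w) = t ^ 2 := by
        rw [htdef, sq, ← Real.exp_add]; congr 1; ring
      -- e4 : Riccati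
      have e4 : hu u w = U u * t + U₁ u * y := hric u w
      -- e1 : hw²
      have e1 : hw u w ^ 2 =
          -(U₁ u) ^ 2 * y ^ 2 + 2 * U₁' u * y - U₂ u - 2 * U' u * t - (U u) ^ 2 * t ^ 2 := by
        have := hwsq u w
        rw [hy2, ht2] at this
        exact this
      -- e2 : mixed derivative from differentiating the Riccati equation in w
      have e2 : huw u w = (U u * t - U₁ u * y) * hw u w := by
        have d2 : HasDerivAt (fun z => U u * Real.exp (h u z) + U₁ u * Real.exp (-(h u z)))
            (U u * (Real.exp (h u w) * hw u w) + U₁ u * (Real.exp (-(h u w)) * (-(hw u w)))) w :=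
          (((hhw u w).exp).const_mul (U u)).add ((((hhw u w).neg).exp).const_mul (U₁ u))
        have d2' : HasDerivAt (fun z => hu u z)
            (U u * (Real.exp (h u w) * hw u w) + U₁ u * (Real.exp (-(h u w)) * (-(hw u w)))) w :=
          d2.congr_of_eventuallyEq (Filter.Eventually.of_forall fun z => hric u z)
        have := (hhuw u w).unique d2'
        rw [this, ← htdef, ← hydef]; ring
      -- e3 : differentiate the hw² identity in u
      have e3 : 2 * hw u w * huw u w =
          -2 * (U₁ u * U₁' u) * y ^ 2 + 2 * (U₁ u ^ 2 * hu u w) * y ^ 2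
            + 2 * U₁'' u * y - 2 * (U₁' u * hu u w) * y - U₂' u
            - 2 * U'' u * t - 2 * (U' u * hu u w) * t
            - 2 * (U u * U' u) * t ^ 2 - 2 * (U u ^ 2 * hu u w) * t ^ 2 := by
        have dL : HasDerivAt (fun x => hw x w ^ 2)
            ((2 : ℕ) * hw u w ^ 1 * huw u w) u := (hhwu u w).pow 2
        have c1 : HasDerivAt (fun x => -(U₁ x) ^ 2 * Real.exp (-(2 * h x w)))
            ((-((2 : ℕ) * U₁ u ^ 1 * U₁' u)) * Real.exp (-(2 * h u w))
              + (-(U₁ u) ^ 2) * (Real.exp (-(2 * h u w)) * (-(2 * hu u w)))) u :=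
          (((hU₁ u).pow 2).neg).mul ((((hhu u w).const_mul 2).neg).exp)
        have c2 : HasDerivAt (fun x => 2 * U₁' x * Real.exp (-(h x w)))
            ((2 * U₁'' u) * Real.exp (-(h u w))
              + (2 * U₁' u) * (Real.exp (-(h u w)) * (-(hu u w)))) u := by
          have := ((hU₁' u).const_mul 2).mul (((hhu u w).neg).exp)
          simpa [Pi.mul_def, mul_assoc, mul_comm, mul_left_comm] using this
        have c4 : HasDerivAt (fun x => 2 * U' x * Real.exp (h x w))
            ((2 * U'' u) * Real.exp (h u w)
              + (2 * U' u) * (Real.exp (h u w) * hu u w)) u := by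
          have := ((hU' u).const_mul 2).mul ((hhu u w).exp)
          simpa [Pi.mul_def, mul_assoc, mul_comm, mul_left_comm] using this
        have c5 : HasDerivAt (fun x => (U x) ^ 2 * Real.exp (2 * h x w))
            (((2 : ℕ) * U u ^ 1 * U' u) * Real.exp (2 * h u w)
              + (U u) ^ 2 * (Real.exp (2 * h u w) * (2 * hu u w))) u :=
          ((hU u).pow 2).mul (((hhu u w).const_mul 2).exp)
        have dR : HasDerivAt (fun x =>
            -(U₁ x) ^ 2 * Real.exp (-(2 * h x w)) + 2 * U₁' x * Real.exp (-(h x w))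
              - U₂ x - 2 * U' x * Real.exp (h x w) - (U x) ^ 2 * Real.exp (2 * h x w))
            (((-((2 : ℕ) * U₁ u ^ 1 * U₁' u)) * Real.exp (-(2 * h u w))
              + (-(U₁ u) ^ 2) * (Real.exp (-(2 * h u w)) * (-(2 * hu u w))))
             + ((2 * U₁'' u) * Real.exp (-(h u w))
              + (2 * U₁' u) * (Real.exp (-(h u w)) * (-(hu u w))))
             - U₂' u
             - ((2 * U'' u) * Real.exp (h u w) + (2 * U' u) * (Real.exp (h u w) * hu u w))
             - (((2 : ℕ) * U u ^ 1 * U' u) * Real.exp (2 * h u w)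
              + (U u) ^ 2 * (Real.exp (2 * h u w) * (2 * hu u w)))) u :=
          (((c1.add c2).sub (hU₂ u)).sub c4).sub c5
        have dL' : HasDerivAt (fun x =>
            -(U₁ x) ^ 2 * Real.exp (-(2 * h x w)) + 2 * U₁' x * Real.exp (-(h x w))
              - U₂ x - 2 * U' x * Real.exp (h x w) - (U x) ^ 2 * Real.exp (2 * h x w))
            ((2 : ℕ) * hw u w ^ 1 * huw u w) u :=
          dL.congr_of_eventuallyEq (Filter.Eventually.of_forall fun x => (hwsq x w).symm)
        have := dL'.unique dR
        rw [hy2, ht2, ← htdef, ← hydef] at this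
        push_cast at this
        linear_combination this
      -- the Laurent coefficients vanish identity
      have Gd : (2 * U₁'' u + 4 * U u * U₁ u ^ 2 - 2 * U₁ u * U₂ u) * y
          + (-(U₂' u + 6 * (U' u * U₁ u + U u * U₁' u)))
          + (-(2 * U'' u - 2 * U u * U₂ u + 4 * U u ^ 2 * U₁ u)) * t = 0 := by
        linear_combination (-1 : ℝ) * e3 + (2 * hw u w) * e2
          + (2 * (U u * t - U₁ u * y)) * e1
          - (2 * U₁ u ^ 2 * y ^ 2 - 2 * U₁' u * y - 2 * U' u * t - 2 * U u ^ 2 * t ^ 2) * e4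
          - (4 * U u * U₁ u ^ 2 * y - 6 * (U u * U₁' u + U' u * U₁ u)
              - 4 * U u ^ 2 * U₁ u * t) * hty
      linear_combination t * Gd
        - (2 * U₁'' u + 4 * U u * U₁ u ^ 2 - 2 * U₁ u * U₂ u) * hty
    have t12 : Real.exp (h u w₁) ≠ Real.exp (h u w₂) := fun he => d12 (Real.exp_injective he)
    have t13 : Real.exp (h u w₁) ≠ Real.exp (h u w₃) := fun he => d13 (Real.exp_injective he)
    have t23 : Real.exp (h u w₂) ≠ Real.exp (h u w₃) := fun he => d23 (Real.exp_injective he)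
    obtain ⟨ha, hb, hc⟩ := quad_zero_aux t12 t13 t23 (key w₁) (key w₂) (key w₃)
    exact ⟨ha, by linarith, by linarith⟩
  have part3 : ∀ u, U'' u = (U₂ u - 2 * U u * U₁ u) * U u := by
    intro u; have := (key2 u).2.2; nlinarith [this]
  have part3' : ∀ u, U₁'' u = (U₂ u - 2 * U u * U₁ u) * U₁ u := by
    intro u; have := (key2 u).1; nlinarith [this]
  have part2 : ∀ u, U'' u * U₁ u = U₁'' u * U u := by
    intro u; rw [part3 u, part3' u]; ring
  have part4 : ∀ u, U₂' u + 6 * (U' u * U₁ u + U u * U₁' u) = 0 := fun u => (key2 u).2.1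
  refine ⟨part1, part2, part3, part4, ?_⟩
  -- constancy of U₂ + 6 U U₁
  set g : ℝ → ℝ := fun u => U₂ u + 6 * (U u * U₁ u) with hgdef
  have hg : ∀ u, HasDerivAt g 0 u := by
    intro u
    have d : HasDerivAt g (U₂' u + 6 * (U' u * U₁ u + U u * U₁' u)) u :=
      (hU₂ u).add (((hU u).mul (hU₁ u)).const_mul 6)
    rwa [part4 u] at d
  have hconst : ∀ u, g u = g 0 := by
    intro u
    exact is_const_of_deriv_eq_zero (fun x => (hg x).differentiableAt)
      (fun x => (hg x).deriv) u 0
  refine ⟨g 0, fun u => ?_, fun u => ?_⟩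
  · have h1 : U₂ u + 6 * (U u * U₁ u) = g 0 := hconst u
    linarith
  · have h1 : U₂ u + 6 * (U u * U₁ u) = g 0 := hconst u
    have hU2 : U₂ u = g 0 - 6 * U u * U₁ u := by linarith
    rw [part3 u, hU2]; ring
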